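/- Let (q_n)_{n≥0} be a sequence of integers with q_n ≥ 2, set p_n = q_0 q_1 ⋯ q_{n−1}, and let h ≥ 1 be an integer coprime to every p_n. If λ ∈ S¹ is such that the limit lim_{n→∞} λ^{p_{n+1}} exists and λ = e^{2πi/h}, then h divides q_n − 1 for all sufficiently large n. -/

import Mathlib

open Filter


lemma key_pow_one (h : ℕ) (hh : 1 ≤ h) (k : ℕ) :
    Complex.exp (2 * Real.pi * Complex.I / h) ^ k = 1 ↔ h ∣ k := by
  have hh0 : (h : ℂ) ≠ 0 := Nat.cast_ne_zero.mpr (by omega)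
  rw [← Complex.exp_nat_mul, Complex.exp_eq_one_iff]
  constructor
  · rintro ⟨n, hn⟩
    have h2 : (2 : ℂ) * Real.pi * Complex.I ≠ 0 := by
      simp [Real.pi_ne_zero, Complex.I_ne_zero]
    have hc : (k : ℂ) = n * h :=
      mul_right_cancel₀ h2 (by field_simp at hn; linear_combination (2 * (Real.pi : ℂ) * Complex.I) * hn)
    have hz : (k : ℤ) = n * h := by exact_mod_cast hc
    exact Int.natCast_dvd_natCast.mp ⟨n, by linarith⟩
  · rintro ⟨m, rfl⟩
    refine ⟨m, ?_⟩
    push_cast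
    field_simp


/-- If `q n ≥ 2`, `p n = q 0 ⋯ q (n-1)`, `h ≥ 1` is coprime to
every `p n`, `λ = e^{2πi/h}`, and `λ ^ p (n+1)` converges, then `h ∣ q n - 1`
for all large `n`. -/
theorem stmt_5 (q : ℕ → ℕ) (hq : ∀ n, 2 ≤ q n)
    (p : ℕ → ℕ) (hp0 : p 0 = 1) (hps : ∀ n, p (n + 1) = p n * q n)
    (h : ℕ) (hh : 1 ≤ h) (hcop : ∀ n, Nat.Coprime h (p n))
    (lam : ℂ) (hlam : lam = Complex.exp (2 * Real.pi * Complex.I / h))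
    (L : ℂ) (hlim : Tendsto (fun n => lam ^ p (n + 1)) atTop (nhds L)) :
    ∀ᶠ n in atTop, h ∣ (q n - 1) := by

  have key : ∀ k, lam ^ k = 1 ↔ h ∣ k := fun k => hlam ▸ key_pow_one h hh k
  have hlam0 : lam ≠ 0 := by rw [hlam]; exact Complex.exp_ne_zero _
  -- values lie in a finite set
  have hmem : ∀ k : ℕ, lam ^ k ∈ (Finset.image (fun j => lam ^ j) (Finset.range h) : Finset ℂ) := by
    intro k
    have hk : lam ^ k = lam ^ (k % h) := by
      conv_lhs => rw [← Nat.mod_add_div k h, pow_add, pow_mul,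
        (key h).mpr dvd_rfl, one_pow, mul_one]
    rw [hk]
    exact Finset.mem_image_of_mem _ (Finset.mem_range.mpr (Nat.mod_lt _ (by omega)))
  set S : Set ℂ := ((Finset.image (fun j => lam ^ j) (Finset.range h) : Finset ℂ) : Set ℂ) with hS
  have hTcl : IsClosed (S \ {L}) := (S.toFinite.subset (Set.diff_subset)).isClosed
  have hLmem : L ∈ (S \ {L})ᶜ := fun hmem' => hmem'.2 rfl
  have hev : ∀ᶠ n in atTop, lam ^ p (n + 1) = L := by
    filter_upwards [hlim.eventually (hTcl.isOpen_compl.eventually_mem hLmem)] with n hn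
    by_contra hne
    exact hn ⟨hmem _, hne⟩
  rw [eventually_atTop] at hev ⊢
  obtain ⟨N, hN⟩ := hev
  refine ⟨N + 1, fun n hn => ?_⟩
  obtain ⟨m, rfl⟩ : ∃ m, n = m + 1 := ⟨n - 1, by omega⟩
  have h1 : lam ^ p (m + 1) = L := hN m (by omega)
  have h2 : lam ^ p (m + 2) = L := hN (m + 1) (by omega)
  have hsplit : p (m + 2) = p (m + 1) + p (m + 1) * (q (m + 1) - 1) := by
    rw [hps (m + 1)]
    have hq1 : q (m + 1) = 1 + (q (m + 1) - 1) := by have := hq (m + 1); omega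
    conv_lhs => rw [hq1]
    ring
  have : lam ^ p (m + 1) * lam ^ (p (m + 1) * (q (m + 1) - 1)) = lam ^ p (m + 1) * 1 := by
    rw [← pow_add, ← hsplit, h2, ← h1, mul_one]
  have hone : lam ^ (p (m + 1) * (q (m + 1) - 1)) = 1 :=
    mul_left_cancel₀ (pow_ne_zero _ hlam0) this
  have hdvd : h ∣ p (m + 1) * (q (m + 1) - 1) := (key _).mp hone
  exact (Nat.Coprime.dvd_of_dvd_mul_left (hcop (m + 1)) hdvd)
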